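/- arXiv:1110.6449 — 3 statements merged into one kernel-verified Lean document; each statement's English description precedes it below -/
import Mathlib

section
/- Let $A$ be an $N \times N$ Hermitian matrix, $d > 0$, $\mathbf{v} \in \mathbb{C}^N$, and $B = A + d\, \mathbf{v}\mathbf{v}^*$. Then the eigenvalues interlace: $\lambda_1(A) \leq \lambda_1(B) \leq \lambda_2(A) \leq \lambda_2(B) \leq \cdots \leq \lambda_N(A) \leq \lambda_N(B)$, where $\lambda_1 \leq \cdots \leq \lambda_N$ denote the ordered eigenvalues. -/
open Module Submodule Finset

noncomputable section InterlacingAux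

variable {N : ℕ}

private lemma aux_norm_sq (b : OrthonormalBasis (Fin N) ℂ (EuclideanSpace ℂ (Fin N)))
    (x : EuclideanSpace ℂ (Fin N)) :
    ‖x‖ ^ 2 = ∑ j, ‖b.repr x j‖ ^ 2 := by
  rw [← b.repr.norm_map x, EuclideanSpace.norm_eq, Real.sq_sqrt (by positivity)]

private lemma aux_quad_expand (T : EuclideanSpace ℂ (Fin N) →ₗ[ℂ] EuclideanSpace ℂ (Fin N))
    (b : OrthonormalBasis (Fin N) ℂ (EuclideanSpace ℂ (Fin N))) (μ : Fin N → ℝ)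
    (hb : ∀ j, T (b j) = (μ j : ℂ) • b j) (x : EuclideanSpace ℂ (Fin N)) :
    (inner ℂ x (T x) : ℂ).re = ∑ j, μ j * ‖b.repr x j‖ ^ 2 := by
  have hTx : T x = ∑ j, (b.repr x j * μ j) • b j := by
    conv_lhs => rw [← b.sum_repr x]
    rw [map_sum]
    refine Finset.sum_congr rfl fun j _ => ?_
    rw [map_smul, hb, smul_smul]
  have h1 : (inner ℂ x (T x) : ℂ) = ∑ j, (μ j : ℂ) * (‖b.repr x j‖ ^ 2 : ℝ) := by
    rw [hTx, inner_sum]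
    refine Finset.sum_congr rfl fun j _ => ?_
    rw [inner_smul_right]
    have : (inner ℂ x (b j) : ℂ) = starRingEnd ℂ (b.repr x j) := by
      rw [b.repr_apply_apply, inner_conj_symm]
    rw [this]
    rw [mul_comm (b.repr x j) ((μ j : ℂ))]
    rw [mul_assoc, Complex.mul_conj']
    norm_cast
  rw [h1, Complex.re_sum]
  push_cast
  simp [← Complex.ofReal_pow]

private lemma aux_quad_le_of_repr (T : EuclideanSpace ℂ (Fin N) →ₗ[ℂ] EuclideanSpace ℂ (Fin N))
    (b : OrthonormalBasis (Fin N) ℂ (EuclideanSpace ℂ (Fin N))) (μ : Fin N → ℝ)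
    (hμ : Monotone μ) (hb : ∀ j, T (b j) = (μ j : ℂ) • b j) (i : Fin N)
    (x : EuclideanSpace ℂ (Fin N)) (hx : ∀ j : Fin N, (i : ℕ) < (j : ℕ) → b.repr x j = 0) :
    (inner ℂ x (T x) : ℂ).re ≤ μ i * ‖x‖ ^ 2 := by
  rw [aux_quad_expand T b μ hb x, aux_norm_sq b x, Finset.mul_sum]
  refine Finset.sum_le_sum fun j _ => ?_
  by_cases hj : (i : ℕ) < (j : ℕ)
  · rw [hx j hj]; simp
  · exact mul_le_mul_of_nonneg_right (hμ (by omega : j ≤ i)) (by positivity)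

private lemma aux_eig_le (T : EuclideanSpace ℂ (Fin N) →ₗ[ℂ] EuclideanSpace ℂ (Fin N))
    (b : OrthonormalBasis (Fin N) ℂ (EuclideanSpace ℂ (Fin N))) (μ : Fin N → ℝ)
    (hμ : Monotone μ) (hb : ∀ j, T (b j) = (μ j : ℂ) • b j) (i : Fin N) (c : ℝ)
    (S : Submodule ℂ (EuclideanSpace ℂ (Fin N))) (hdim : (i : ℕ) + 1 ≤ finrank ℂ S)
    (hq : ∀ x ∈ S, (inner ℂ x (T x) : ℂ).re ≤ c * ‖x‖ ^ 2) : μ i ≤ c := by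
  classical
  set L : Submodule ℂ (EuclideanSpace ℂ (Fin N)) :=
    Submodule.span ℂ (Set.range fun k : Fin (i : ℕ) => b ⟨k, k.2.trans i.2⟩) with hL
  have hon : Orthonormal ℂ (fun k : Fin (i : ℕ) => b ⟨(k : ℕ), k.2.trans i.2⟩) :=
    b.orthonormal.comp _ (fun k l h => Fin.ext (congrArg (Fin.val (n := N)) h))
  have hLfin : finrank ℂ L = i := by
    rw [hL, finrank_span_eq_card hon.linearIndependent, Fintype.card_fin]
  have hLperp : finrank ℂ (Lᗮ) = N - i := by
    have h2 := Submodule.finrank_add_finrank_orthogonal (K := L)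
    rw [hLfin, finrank_euclideanSpace_fin] at h2
    omega
  have hinter : S ⊓ Lᗮ ≠ ⊥ := by
    intro hbot
    have h1 := Submodule.finrank_sup_add_finrank_inf_eq S Lᗮ
    have h2 : finrank ℂ (S ⊔ Lᗮ : Submodule ℂ (EuclideanSpace ℂ (Fin N))) ≤ N := by
      simpa [finrank_euclideanSpace_fin] using Submodule.finrank_le (S ⊔ Lᗮ)
    rw [hbot, finrank_bot] at h1
    have hi : (i : ℕ) < N := i.2
    omega
  obtain ⟨x, hxmem, hx0⟩ := Submodule.exists_mem_ne_zero_of_ne_bot hinter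
  have hrepr0 : ∀ j : Fin N, (j : ℕ) < (i : ℕ) → b.repr x j = 0 := by
    intro j hj
    rw [b.repr_apply_apply]
    have hbj : b j ∈ L := Submodule.subset_span ⟨⟨(j : ℕ), hj⟩, congrArg b (Fin.ext rfl)⟩
    exact (Submodule.mem_orthogonal L x).mp hxmem.2 (b j) hbj
  have hlow : μ i * ‖x‖ ^ 2 ≤ (inner ℂ x (T x) : ℂ).re := by
    rw [aux_quad_expand T b μ hb x, aux_norm_sq b x, Finset.mul_sum]
    refine Finset.sum_le_sum fun j _ => ?_
    by_cases hj : (j : ℕ) < (i : ℕ)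
    · rw [hrepr0 j hj]; simp
    · exact mul_le_mul_of_nonneg_right (hμ (by omega : i ≤ j)) (by positivity)
  have hnorm : 0 < ‖x‖ ^ 2 := by have := norm_pos_iff.mpr hx0; positivity
  exact le_of_mul_le_mul_right (hlow.trans (hq x hxmem.1)) hnorm

end InterlacingAux

/-- Weyl's interlacing inequalities for a rank-one positive perturbation
`B = A + d v v*` of a Hermitian matrix `A`: the sorted eigenvalues satisfy
`λ₁(A) ≤ λ₁(B) ≤ λ₂(A) ≤ ⋯ ≤ λ_N(A) ≤ λ_N(B)`. -/
theorem rank_one_interlacing {N : ℕ}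
    (A : Matrix (Fin N) (Fin N) ℂ) (hA : A.IsHermitian)
    (d : ℝ) (hd : 0 < d) (v : Fin N → ℂ)
    (B : Matrix (Fin N) (Fin N) ℂ)
    (hB : B = A + (d : ℂ) • Matrix.vecMulVec v (star v))
    (hBh : B.IsHermitian)
    (α β : Fin N → ℝ) (hαm : Monotone α) (hβm : Monotone β)
    (hα : ∃ e : Equiv.Perm (Fin N), α = hA.eigenvalues ∘ e)
    (hβ : ∃ e : Equiv.Perm (Fin N), β = hBh.eigenvalues ∘ e) :
    (∀ i : Fin N, α i ≤ β i) ∧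
      ∀ i : Fin N, ∀ h : (i : ℕ) + 1 < N, β i ≤ α ⟨(i : ℕ) + 1, h⟩ := by
  classical
  obtain ⟨eA, hαe⟩ := hα
  obtain ⟨eB, hβe⟩ := hβ
  set bA : OrthonormalBasis (Fin N) ℂ (EuclideanSpace ℂ (Fin N)) :=
    hA.eigenvectorBasis.reindex eA.symm with hbAdef
  set bB : OrthonormalBasis (Fin N) ℂ (EuclideanSpace ℂ (Fin N)) :=
    hBh.eigenvectorBasis.reindex eB.symm with hbBdef
  set vE : EuclideanSpace ℂ (Fin N) := (WithLp.equiv 2 (Fin N → ℂ)).symm v with hvE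
  -- eigen-equations for the reindexed bases
  have hbase : ∀ (M : Matrix (Fin N) (Fin N) ℂ) (hM : M.IsHermitian) (e : Equiv.Perm (Fin N))
      (j : Fin N), Matrix.toEuclideanLin M ((hM.eigenvectorBasis.reindex e.symm) j)
        = (hM.eigenvalues (e j) : ℂ) • (hM.eigenvectorBasis.reindex e.symm) j := by
    intro M hM e j
    rw [OrthonormalBasis.reindex_apply]
    simp only [Equiv.symm_symm]
    rw [Matrix.toEuclideanLin_apply]
    have h := hM.mulVec_eigenvectorBasis (e j)
    apply (WithLp.equiv 2 (Fin N → ℂ)).injective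
    show Matrix.mulVec M ((WithLp.equiv 2 (Fin N → ℂ)) (hM.eigenvectorBasis (e j))) = _
    rw [show (WithLp.equiv 2 (Fin N → ℂ)) (hM.eigenvectorBasis (e j))
        = ⇑(hM.eigenvectorBasis (e j)) from rfl, h]
    ext i
    simp
  have hbA : ∀ j, Matrix.toEuclideanLin A (bA j) = (α j : ℂ) • bA j := by
    intro j; rw [hαe]; exact hbase A hA eA j
  have hbB : ∀ j, Matrix.toEuclideanLin B (bB j) = (β j : ℂ) • bB j := by
    intro j; rw [hβe]; exact hbase B hBh eB j
  -- the rank-one decomposition at the operator level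
  have hrank1 : ∀ x : EuclideanSpace ℂ (Fin N),
      Matrix.toEuclideanLin B x
        = Matrix.toEuclideanLin A x + ((d : ℂ) * inner ℂ vE x) • vE := by
    intro x
    rw [hB, map_add, LinearMap.add_apply]
    congr 1
    rw [Matrix.toEuclideanLin_apply]
    apply (WithLp.equiv 2 (Fin N → ℂ)).injective
    simp only [hvE]
    ext i
    simp [Matrix.mulVec, Matrix.vecMulVec_apply, dotProduct, PiLp.inner_apply,
      Finset.mul_sum, Finset.sum_mul, RCLike.inner_apply]
    ring_nf
    congr 1
    ext j
    ring
  have hquad : ∀ x : EuclideanSpace ℂ (Fin N),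
      (inner ℂ x (Matrix.toEuclideanLin B x) : ℂ).re
        = (inner ℂ x (Matrix.toEuclideanLin A x) : ℂ).re + d * ‖(inner ℂ vE x : ℂ)‖ ^ 2 := by
    intro x
    rw [hrank1, inner_add_right, Complex.add_re, inner_smul_right]
    congr 1
    have hc : (inner ℂ x vE : ℂ) = starRingEnd ℂ (inner ℂ vE x) := (inner_conj_symm _ _).symm
    rw [hc, mul_assoc, Complex.mul_conj']
    norm_cast
  have hker : ∀ x : EuclideanSpace ℂ (Fin N), inner ℂ vE x = (0 : ℂ) →
      Matrix.toEuclideanLin B x = Matrix.toEuclideanLin A x := by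
    intro x h0; rw [hrank1, h0]; simp
  refine ⟨?_, ?_⟩
  · -- α i ≤ β i
    intro i
    set S1 : Submodule ℂ (EuclideanSpace ℂ (Fin N)) :=
      Submodule.span ℂ (Set.range fun k : Fin ((i : ℕ) + 1) =>
        bB ⟨(k : ℕ), lt_of_le_of_lt (Nat.lt_succ_iff.mp k.2) i.2⟩) with hS1
    have hon : Orthonormal ℂ (fun k : Fin ((i : ℕ) + 1) =>
        bB ⟨(k : ℕ), lt_of_le_of_lt (Nat.lt_succ_iff.mp k.2) i.2⟩) :=
      bB.orthonormal.comp _ (fun k l h => Fin.ext (congrArg (Fin.val (n := N)) h))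
    have hdim : (i : ℕ) + 1 ≤ finrank ℂ S1 := by
      rw [hS1, finrank_span_eq_card hon.linearIndependent, Fintype.card_fin]
    have hperp : ∀ x ∈ S1, ∀ j : Fin N, (i : ℕ) < (j : ℕ) → bB.repr x j = 0 := by
      intro x hx j hj
      rw [bB.repr_apply_apply]
      have hsub : S1 ≤ LinearMap.ker ((innerSL ℂ (bB j)) : EuclideanSpace ℂ (Fin N) →ₗ[ℂ] ℂ) := by
        rw [hS1, Submodule.span_le]
        rintro y ⟨k, rfl⟩
        simp only [SetLike.mem_coe, LinearMap.mem_ker, ContinuousLinearMap.coe_coe,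
          innerSL_apply_apply]
        exact bB.orthonormal.2 (by
          intro hjk
          have : (j : ℕ) = (k : ℕ) := congrArg Fin.val hjk
          omega)
      simpa using hsub hx
    refine aux_eig_le (Matrix.toEuclideanLin A) bA α hαm hbA i (β i) S1 hdim ?_
    intro x hx
    have h1 : (inner ℂ x (Matrix.toEuclideanLin A x) : ℂ).re
        ≤ (inner ℂ x (Matrix.toEuclideanLin B x) : ℂ).re := by
      rw [hquad x]
      have := mul_nonneg hd.le (sq_nonneg ‖(inner ℂ vE x : ℂ)‖)
      linarith
    have h2 := aux_quad_le_of_repr (Matrix.toEuclideanLin B) bB β hβm hbB i x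
      (fun j hj => hperp x hx j hj)
    linarith
  · -- β i ≤ α (i+1)
    intro i h
    set i' : Fin N := ⟨(i : ℕ) + 1, h⟩ with hi'
    set S2 : Submodule ℂ (EuclideanSpace ℂ (Fin N)) :=
      Submodule.span ℂ (Set.range fun k : Fin ((i : ℕ) + 2) =>
        bA ⟨(k : ℕ), lt_of_le_of_lt (Nat.lt_succ_iff.mp k.2) h⟩) with hS2
    have hon : Orthonormal ℂ (fun k : Fin ((i : ℕ) + 2) =>
        bA ⟨(k : ℕ), lt_of_le_of_lt (Nat.lt_succ_iff.mp k.2) h⟩) :=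
      bA.orthonormal.comp _ (fun k l hkl => Fin.ext (congrArg (Fin.val (n := N)) hkl))
    have hdimS2 : finrank ℂ S2 = (i : ℕ) + 2 := by
      rw [hS2, finrank_span_eq_card hon.linearIndependent, Fintype.card_fin]
    set K : Submodule ℂ (EuclideanSpace ℂ (Fin N)) := LinearMap.ker ((innerSL ℂ vE) : EuclideanSpace ℂ (Fin N) →ₗ[ℂ] ℂ) with hK
    have hKeq : K = LinearMap.ker ((innerSL ℂ vE) : EuclideanSpace ℂ (Fin N) →ₗ[ℂ] ℂ) := rfl
    have hdimK : N ≤ finrank ℂ K + 1 := by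
      have h1 := LinearMap.finrank_range_add_finrank_ker ((innerSL ℂ vE) :
        EuclideanSpace ℂ (Fin N) →ₗ[ℂ] ℂ)
      rw [finrank_euclideanSpace_fin, ← hKeq] at h1
      have h2 : finrank ℂ (LinearMap.range ((innerSL ℂ vE) :
          EuclideanSpace ℂ (Fin N) →ₗ[ℂ] ℂ)) ≤ 1 := by
        simpa [Module.finrank_self] using
          Submodule.finrank_le (LinearMap.range ((innerSL ℂ vE) :
            EuclideanSpace ℂ (Fin N) →ₗ[ℂ] ℂ))
      omega
    have hdim : (i : ℕ) + 1 ≤ finrank ℂ (S2 ⊓ K : Submodule ℂ (EuclideanSpace ℂ (Fin N))) := by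
      have h1 := Submodule.finrank_sup_add_finrank_inf_eq S2 K
      have h2 : finrank ℂ (S2 ⊔ K : Submodule ℂ (EuclideanSpace ℂ (Fin N))) ≤ N := by
        simpa [finrank_euclideanSpace_fin] using Submodule.finrank_le (S2 ⊔ K)
      omega
    have hperp : ∀ x ∈ S2, ∀ j : Fin N, ((i' : ℕ)) < (j : ℕ) → bA.repr x j = 0 := by
      intro x hx j hj
      rw [bA.repr_apply_apply]
      have hsub : S2 ≤ LinearMap.ker ((innerSL ℂ (bA j)) : EuclideanSpace ℂ (Fin N) →ₗ[ℂ] ℂ) := by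
        rw [hS2, Submodule.span_le]
        rintro y ⟨k, rfl⟩
        simp only [SetLike.mem_coe, LinearMap.mem_ker, ContinuousLinearMap.coe_coe,
          innerSL_apply_apply]
        exact bA.orthonormal.2 (by
          intro hjk
          have : (j : ℕ) = (k : ℕ) := congrArg Fin.val hjk
          simp only [hi'] at hj
          omega)
      simpa using hsub hx
    refine aux_eig_le (Matrix.toEuclideanLin B) bB β hβm hbB i (α i') (S2 ⊓ K) hdim ?_
    intro x hx
    have h0 : inner ℂ vE x = (0 : ℂ) := by
      have h' : (innerSL ℂ vE) x = 0 := hx.2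
      simpa using h'
    rw [hquad x, h0]
    simp only [norm_zero]
    have h2 := aux_quad_le_of_repr (Matrix.toEuclideanLin A) bA α hαm hbA i' x
      (fun j hj => hperp x hx.1 j hj)
    have hz : d * (0 : ℝ) ^ 2 = 0 := by ring
    rw [hz, add_zero]
    exact h2
end

section
/- Suppose the eigenvalues of a $k\times k$ Hermitian matrix $A$ are distinct and $\langle \mathbf{v}, \mathbf{u}^{(i)}\rangle \neq 0$ for every eigenvector $\mathbf{u}^{(i)}$ of $A$, where $\mathbf{v} \in \mathbb{C}^k$. Then for every $d \in \mathbb{R} \setminus \{0\}$, the spectra of $A$ and $A + d\,\mathbf{v}\mathbf{v}^*$ are disjoint: $\sigma(A + d\,\mathbf{v}\mathbf{v}^*) \cap \sigma(A) = \emptyset$. -/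
open Matrix

private lemma exists_eigvec {k : ℕ} (A : Matrix (Fin k) (Fin k) ℂ) {μ : ℂ}
    (h : μ ∈ spectrum ℂ A) : ∃ w : Fin k → ℂ, w ≠ 0 ∧ A.mulVec w = μ • w := by
  rw [← AlgEquiv.spectrum_eq (Matrix.toLinAlgEquiv' : Matrix (Fin k) (Fin k) ℂ ≃ₐ[ℂ] _),
    ← Module.End.hasEigenvalue_iff_mem_spectrum] at h
  obtain ⟨w, hw⟩ := h.exists_hasEigenvector
  refine ⟨w, hw.right, ?_⟩
  have := hw.apply_eq_smul
  rwa [Matrix.toLinAlgEquiv'_apply] at this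

private lemma dot_self_ne_zero {k : ℕ} {w : Fin k → ℂ} (hw : w ≠ 0) :
    dotProduct (star w) w ≠ 0 := by
  intro h
  apply hw
  funext i
  have h2 : ∑ j, Complex.normSq (w j) = 0 := by
    have : dotProduct (star w) w = ∑ j, (Complex.normSq (w j) : ℂ) := by
      simp [dotProduct, Complex.normSq_eq_conj_mul_self]
    rw [this] at h
    exact_mod_cast h
  have h3 := (Finset.sum_eq_zero_iff_of_nonneg (fun j _ => Complex.normSq_nonneg (w j))).mp h2
    i (Finset.mem_univ i)
  simpa using Complex.normSq_eq_zero.mp h3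

/-- If a Hermitian matrix `A` has distinct eigenvalues and `⟨v, u⟩ ≠ 0` for every
eigenvector `u` of `A`, then for every `d ≠ 0` the spectra of `A` and
`A + d v v*` are disjoint. -/
theorem rank_one_spectra_disjoint {k : ℕ}
    (A : Matrix (Fin k) (Fin k) ℂ) (hA : A.IsHermitian)
    (hdist : Function.Injective hA.eigenvalues)
    (v : Fin k → ℂ)
    (hv : ∀ (μ : ℂ) (w : Fin k → ℂ), w ≠ 0 → A.mulVec w = μ • w →
      dotProduct (star v) w ≠ 0)
    (d : ℝ) (hd : d ≠ 0) :
    spectrum ℂ (A + (d : ℂ) • Matrix.vecMulVec v (star v)) ∩ spectrum ℂ A = ∅ := by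
  ext μ
  simp only [Set.mem_inter_iff, Set.mem_empty_iff_false, iff_false, not_and]
  intro hμB hμA
  obtain ⟨w, hw0, hw⟩ := exists_eigvec A hμA
  obtain ⟨u, hu0, hu⟩ := exists_eigvec _ hμB
  -- key fact: star w ⬝ᵥ (A *ᵥ x) = star μ * (star w ⬝ᵥ x) for all x
  have hkey : ∀ x : Fin k → ℂ, dotProduct (star w) (A.mulVec x)
      = star μ * dotProduct (star w) x := by
    intro x
    rw [Matrix.dotProduct_mulVec]
    have hvm : Matrix.vecMul (star w) A = star (μ • w) := by
      conv_lhs => rw [← hA.eq, ← Matrix.star_mulVec, hw]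
    rw [hvm]
    simp only [dotProduct, Pi.star_apply, star_smul, Pi.smul_apply, smul_eq_mul,
      Finset.mul_sum, RCLike.star_def]
    exact Finset.sum_congr rfl fun i _ => by rw [_root_.map_mul]; ring
  -- μ is real
  have hreal : star μ = μ := by
    have h1 := hkey w
    rw [hw] at h1
    simp only [dotProduct_smul, smul_eq_mul] at h1
    have := dot_self_ne_zero hw0
    exact (mul_right_cancel₀ this h1).symm
  -- expand the perturbed eigen-equation
  have hexp : A.mulVec u + ((d : ℂ) * dotProduct (star v) u) • v = μ • u := by
    have : (A + (d : ℂ) • Matrix.vecMulVec v (star v)).mulVec u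
        = A.mulVec u + ((d : ℂ) * dotProduct (star v) u) • v := by
      rw [Matrix.add_mulVec]
      congr 1
      funext i
      simp [Matrix.mulVec, Matrix.vecMulVec, dotProduct, Finset.mul_sum, mul_assoc,
        mul_comm, mul_left_comm]
    rw [this] at hu
    exact hu
  -- pair with w
  have hpair := congrArg (dotProduct (star w)) hexp
  rw [dotProduct_add, hkey, hreal, dotProduct_smul, dotProduct_smul] at hpair
  have hzero : ((d : ℂ) * dotProduct (star v) u) * dotProduct (star w) v = 0 := by
    have := hpair
    simp only [smul_eq_mul] at this
    linear_combination this
  have hwv : dotProduct (star w) v ≠ 0 := by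
    intro h
    apply hv μ w hw0 hw
    have : star (dotProduct (star w) v) = dotProduct (star v) w := by
      simp [dotProduct, mul_comm]
    rw [← this, h, star_zero]
  have hdC : (d : ℂ) ≠ 0 := by exact_mod_cast hd
  have hvu : dotProduct (star v) u = 0 := by
    rcases mul_eq_zero.mp hzero with h | h
    · rcases mul_eq_zero.mp h with h | h
      · exact absurd h hdC
      · exact h
    · exact absurd h hwv
  -- then u is an eigenvector of A, contradiction
  apply hv μ u hu0 _ hvu
  have := hexp
  rw [hvu, mul_zero, zero_smul, add_zero] at this
  exact this
end

section
/- Let $H$ be an $N\times N$ Hermitian matrix with eigenvalues $\lambda_\alpha$, let $\mathbf{v}$ be a unit vector, fix $E > \lambda_N$ and $0 < \eta \leq \eta_0 \leq E - \lambda_N$. Then $|\mathrm{Re}\, G_{\mathbf{v}\mathbf{v}}(E+i\eta) - \mathrm{Re}\, G_{\mathbf{v}\mathbf{v}}(E+i\eta_0)| \leq \mathrm{Im}\, G_{\mathbf{v}\mathbf{v}}(E+i\eta_0)$, where $G_{\mathbf{v}\mathbf{v}}(z) = \langle \mathbf{v}, (H-z)^{-1}\mathbf{v}\rangle$. -/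
open Matrix Complex

/-- Resolvent quadratic form via spectral decomposition. -/
lemma resolvent_quadform {N : ℕ} (H : Matrix (Fin N) (Fin N) ℂ) (hH : H.IsHermitian)
    (v : Fin N → ℂ) (z : ℂ) (hz : ∀ α, ((hH.eigenvalues α : ℂ) - z) ≠ 0) :
    star v ⬝ᵥ ((H - z • 1)⁻¹ *ᵥ v) =
      ∑ α, (Complex.normSq
          ((star (hH.eigenvectorUnitary : Matrix (Fin N) (Fin N) ℂ) *ᵥ v) α) : ℂ) *
        ((hH.eigenvalues α : ℂ) - z)⁻¹ := by
  set U : Matrix (Fin N) (Fin N) ℂ := (hH.eigenvectorUnitary : Matrix (Fin N) (Fin N) ℂ) with hUdef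
  have hU1 : U * star U = 1 := (Matrix.mem_unitaryGroup_iff).mp hH.eigenvectorUnitary.2
  have hU2 : star U * U = 1 := (Matrix.mem_unitaryGroup_iff').mp hH.eigenvectorUnitary.2
  have hHz : H - z • 1 =
      U * diagonal (fun α => (hH.eigenvalues α : ℂ) - z) * star U := by
    conv_lhs => rw [hH.spectral_theorem, Unitary.conjStarAlgAut_apply]
    have h1 : (z • 1 : Matrix (Fin N) (Fin N) ℂ) = U * (z • 1) * star U := by
      rw [Matrix.mul_smul, Matrix.mul_one, Matrix.smul_mul, hU1]
    rw [h1, ← Matrix.sub_mul, ← Matrix.mul_sub]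
    have h2 : diagonal (RCLike.ofReal ∘ hH.eigenvalues) - (z • 1 : Matrix (Fin N) (Fin N) ℂ)
        = diagonal (fun α => (hH.eigenvalues α : ℂ) - z) := by
      ext i j
      by_cases h : i = j <;>
        simp [Matrix.diagonal_apply, Matrix.one_apply, h, Function.comp, Matrix.sub_apply]
    rw [h2]
  have hinv : (H - z • 1)⁻¹ =
      U * diagonal (fun α => ((hH.eigenvalues α : ℂ) - z)⁻¹) * star U := by
    apply Matrix.inv_eq_right_inv
    rw [hHz]
    calc U * diagonal (fun α => (hH.eigenvalues α : ℂ) - z) * star U *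
          (U * diagonal (fun α => ((hH.eigenvalues α : ℂ) - z)⁻¹) * star U)
        = U * (diagonal (fun α => (hH.eigenvalues α : ℂ) - z) * ((star U * U) *
            diagonal (fun α => ((hH.eigenvalues α : ℂ) - z)⁻¹))) * star U := by
          noncomm_ring
      _ = 1 := by
          rw [hU2, Matrix.one_mul, Matrix.diagonal_mul_diagonal]
          have : (fun α => ((hH.eigenvalues α : ℂ) - z) * ((hH.eigenvalues α : ℂ) - z)⁻¹)
              = fun _ => (1 : ℂ) := by
            funext α; exact mul_inv_cancel₀ (hz α)
          rw [this, Matrix.diagonal_one, Matrix.mul_one, hU1]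
  rw [hinv]
  set w : Fin N → ℂ := star U *ᵥ v with hw
  have hvw : star v ᵥ* U = star w := by
    rw [hw, Matrix.star_mulVec]
    congr 1
    simp [Matrix.star_eq_conjTranspose]
  rw [← Matrix.mulVec_mulVec, ← Matrix.mulVec_mulVec, Matrix.dotProduct_mulVec, hvw]
  simp only [Matrix.mulVec_diagonal, dotProduct, Pi.star_apply]
  refine Finset.sum_congr rfl fun α _ => ?_
  have : (starRingEnd ℂ) (w α) * w α = (Complex.normSq (w α) : ℂ) := by
    rw [mul_comm, Complex.mul_conj]
  rw [RCLike.star_def]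
  rw [show (starRingEnd ℂ) (w α) * (((hH.eigenvalues α : ℂ) - z)⁻¹ * w α)
      = ((starRingEnd ℂ) (w α) * w α) * ((hH.eigenvalues α : ℂ) - z)⁻¹ by ring, this]

lemma term_bound (c a η η₀ : ℝ) (hc : 0 ≤ c) (hη : 0 < η) (hηη : η ≤ η₀) (ha : η₀ ≤ a) :
    |c * (-a / (a ^ 2 + η ^ 2)) - c * (-a / (a ^ 2 + η₀ ^ 2))| ≤
      c * (η₀ / (a ^ 2 + η₀ ^ 2)) := by
  have ha0 : 0 < a := lt_of_lt_of_le (lt_of_lt_of_le hη hηη) ha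
  have hD1 : 0 < a ^ 2 + η ^ 2 := by positivity
  have hD2 : 0 < a ^ 2 + η₀ ^ 2 := by positivity
  have e1 : c * (-a / (a ^ 2 + η ^ 2)) - c * (-a / (a ^ 2 + η₀ ^ 2)) =
      -(c * a * (η₀ ^ 2 - η ^ 2) / ((a ^ 2 + η ^ 2) * (a ^ 2 + η₀ ^ 2))) := by
    field_simp
    ring
  have hnum : 0 ≤ c * a * (η₀ ^ 2 - η ^ 2) := by
    apply mul_nonneg (mul_nonneg hc ha0.le)
    nlinarith
  rw [e1, abs_neg, _root_.abs_of_nonneg (div_nonneg hnum (by positivity))]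
  rw [show c * (η₀ / (a ^ 2 + η₀ ^ 2)) = c * η₀ / (a ^ 2 + η₀ ^ 2) by ring,
    div_le_div_iff₀ (by positivity) hD2]
  have key : a * (η₀ ^ 2 - η ^ 2) ≤ η₀ * (a ^ 2 + η ^ 2) := by
    nlinarith [mul_nonneg (mul_nonneg (le_of_lt (lt_of_lt_of_le hη hηη) : (0:ℝ) ≤ η₀) ha0.le) (sub_nonneg.2 ha)]
  nlinarith [mul_le_mul_of_nonneg_right (mul_le_mul_of_nonneg_left key hc) hD2.le]

/-- For a Hermitian matrix `H` with all eigenvalues below `E`, a unit vector `v`,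
and `0 < η ≤ η₀ ≤ E - λ_max`, one has
`|Re G_vv(E + iη) - Re G_vv(E + iη₀)| ≤ Im G_vv(E + iη₀)`. -/
theorem re_Gvv_difference_bound {N : ℕ}
    (H : Matrix (Fin N) (Fin N) ℂ) (hH : H.IsHermitian)
    (v : Fin N → ℂ) (hv : ∑ i, ‖v i‖ ^ 2 = 1)
    (E η η₀ : ℝ) (hη : 0 < η) (hηη : η ≤ η₀)
    (hE : ∀ i : Fin N, η₀ ≤ E - hH.eigenvalues i) :
    |(dotProduct (star v)
        (Matrix.mulVec (H - ((E : ℂ) + η * Complex.I) • 1)⁻¹ v)).re -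
      (dotProduct (star v)
        (Matrix.mulVec (H - ((E : ℂ) + η₀ * Complex.I) • 1)⁻¹ v)).re| ≤
      (dotProduct (star v)
        (Matrix.mulVec (H - ((E : ℂ) + η₀ * Complex.I) • 1)⁻¹ v)).im := by
  set g : Fin N → ℝ := hH.eigenvalues with hg
  set c : Fin N → ℝ := fun α =>
    Complex.normSq ((star (hH.eigenvectorUnitary : Matrix (Fin N) (Fin N) ℂ) *ᵥ v) α) with hc
  have hη₀ : 0 < η₀ := lt_of_lt_of_le hη hηη
  have hkey : ∀ η' : ℝ, 0 < η' →
      (dotProduct (star v)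
          (Matrix.mulVec (H - ((E : ℂ) + η' * Complex.I) • 1)⁻¹ v)).re
        = ∑ α, c α * (-(E - g α) / ((E - g α) ^ 2 + η' ^ 2)) ∧
      (dotProduct (star v)
          (Matrix.mulVec (H - ((E : ℂ) + η' * Complex.I) • 1)⁻¹ v)).im
        = ∑ α, c α * (η' / ((E - g α) ^ 2 + η' ^ 2)) := by
    intro η' hη'
    have hz : ∀ α, ((hH.eigenvalues α : ℂ) - ((E : ℂ) + η' * Complex.I)) ≠ 0 := by
      intro α h
      have h2 := congrArg Complex.im h
      simp at h2
      exact hη'.ne' h2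
    have hsum := resolvent_quadform H hH v ((E : ℂ) + η' * Complex.I) hz
    have hterm : ∀ α : Fin N,
        ((Complex.normSq ((star (hH.eigenvectorUnitary : Matrix (Fin N) (Fin N) ℂ) *ᵥ v) α) : ℂ) *
          ((hH.eigenvalues α : ℂ) - ((E : ℂ) + η' * Complex.I))⁻¹).re
          = c α * (-(E - g α) / ((E - g α) ^ 2 + η' ^ 2)) ∧
        ((Complex.normSq ((star (hH.eigenvectorUnitary : Matrix (Fin N) (Fin N) ℂ) *ᵥ v) α) : ℂ) *
          ((hH.eigenvalues α : ℂ) - ((E : ℂ) + η' * Complex.I))⁻¹).im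
          = c α * (η' / ((E - g α) ^ 2 + η' ^ 2)) := by
      intro α
      constructor <;>
      · simp [Complex.inv_re, Complex.inv_im, Complex.normSq_apply, Complex.sub_re,
          Complex.add_re, Complex.mul_re, Complex.mul_im, Complex.sub_im, Complex.add_im,
          Complex.I_re, Complex.I_im, Complex.ofReal_re, Complex.ofReal_im]
        simp only [hc, Complex.normSq_apply]
        ring
    constructor
    · rw [hsum, Complex.re_sum]
      exact Finset.sum_congr rfl fun α _ => (hterm α).1
    · rw [hsum, Complex.im_sum]
      exact Finset.sum_congr rfl fun α _ => (hterm α).2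
  rw [(hkey η hη).1, (hkey η₀ hη₀).1, (hkey η₀ hη₀).2, ← Finset.sum_sub_distrib]
  calc |∑ α, (c α * (-(E - g α) / ((E - g α) ^ 2 + η ^ 2))
          - c α * (-(E - g α) / ((E - g α) ^ 2 + η₀ ^ 2)))|
      ≤ ∑ α, |c α * (-(E - g α) / ((E - g α) ^ 2 + η ^ 2))
          - c α * (-(E - g α) / ((E - g α) ^ 2 + η₀ ^ 2))| := Finset.abs_sum_le_sum_abs _ _
    _ ≤ ∑ α, c α * (η₀ / ((E - g α) ^ 2 + η₀ ^ 2)) := by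
        apply Finset.sum_le_sum
        intro α _
        exact term_bound (c α) (E - g α) η η₀ (Complex.normSq_nonneg _) hη hηη (hE α)
end
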